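/- arXiv:2109.12661 — 2 statements merged into one kernel-verified Lean document; each statement's English description precedes it below -/
import Mathlib

section
/- Consider the discrete-time LTI system X(k+1) = 𝒟(X(k)) with 𝒟(X) = Σ_{i=0}^{N} Jᵢ X Jᵢᵀ. Suppose there exist symmetric positive definite matrices P and Q such that 𝒟*(P) − P + Q = 0, where 𝒟*(X) = Σ_{i=0}^{N} Jᵢᵀ X Jᵢ. Then for every X₀ ∈ 𝕊ⁿ_{⪰0}, the solution satisfies trace(X(k)) ≤ (λ_max(P)/λ_min(P)) · ρ^{k−k₀} · trace(X₀) for all k ≥ k₀, where ρ = 1 − λ_min(Q)/λ_max(P). -/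
open Matrix BigOperators

private lemma psd_diag_nonneg {n : ℕ} {M : Matrix (Fin n) (Fin n) ℝ}
    (hM : M.PosSemidef) (i : Fin n) : 0 ≤ M i i := by
  exact hM.diag_nonneg

private lemma psd_trace_nonneg {n : ℕ} {M : Matrix (Fin n) (Fin n) ℝ}
    (hM : M.PosSemidef) : 0 ≤ M.trace :=
  Finset.sum_nonneg fun i _ => psd_diag_nonneg hM i

private lemma trace_mul_bounds {n : ℕ} [Nonempty (Fin n)] {A X : Matrix (Fin n) (Fin n) ℝ}
    (hA : A.IsHermitian) (hX : X.PosSemidef) :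
    (⨅ i, hA.eigenvalues i) * X.trace ≤ (A * X).trace ∧
      (A * X).trace ≤ (⨆ i, hA.eigenvalues i) * X.trace := by
  classical
  set U : Matrix (Fin n) (Fin n) ℝ := (hA.eigenvectorUnitary : Matrix (Fin n) (Fin n) ℝ) with hU
  set d : Fin n → ℝ := hA.eigenvalues with hd
  have hUU : U * star U = 1 := Matrix.mem_unitaryGroup_iff.mp hA.eigenvectorUnitary.2
  set M : Matrix (Fin n) (Fin n) ℝ := star U * X * U with hM
  have hMpsd : M.PosSemidef := by
    have := hX.conjTranspose_mul_mul_same U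
    exact this
  have hUU' : star U * U = 1 := Matrix.mem_unitaryGroup_iff'.mp hA.eigenvectorUnitary.2
  have hDdiag : Matrix.diagonal ((RCLike.ofReal : ℝ → ℝ) ∘ d) = Matrix.diagonal d := by
    simp
  have hAX : A * X = U * (Matrix.diagonal d * M) * star U := by
    have h1 : U * (Matrix.diagonal d * (star U * X * U)) * star U
        = U * Matrix.diagonal d * star U * X * (U * star U) := by noncomm_ring
    rw [hM, h1, hUU, mul_one]
    conv_lhs => rw [hA.spectral_theorem, Unitary.conjStarAlgAut_apply, hDdiag, ← hU]
  have htr : (A * X).trace = ∑ i, d i * M i i := by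
    rw [hAX, Matrix.trace_mul_cycle, ← Matrix.mul_assoc, hUU', one_mul]
    simp [Matrix.trace, Matrix.diag, Matrix.diagonal_mul]
  have htrM : M.trace = X.trace := by
    rw [hM, Matrix.trace_mul_cycle, hUU, one_mul]
  have hbdd : BddAbove (Set.range d) := Set.Finite.bddAbove (Set.finite_range d)
  have hbddb : BddBelow (Set.range d) := Set.Finite.bddBelow (Set.finite_range d)
  constructor
  · rw [htr, ← htrM]
    rw [Matrix.trace, Finset.mul_sum]
    refine Finset.sum_le_sum fun i _ => ?_
    exact mul_le_mul_of_nonneg_right (ciInf_le hbddb i) (psd_diag_nonneg hMpsd i)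
  · rw [htr, ← htrM]
    rw [Matrix.trace, Finset.mul_sum]
    refine Finset.sum_le_sum fun i _ => ?_
    exact mul_le_mul_of_nonneg_right (le_ciSup hbdd i) (psd_diag_nonneg hMpsd i)

theorem discrete_lyapunov_trace_decay {n N : ℕ}
    (J : ℕ → Matrix (Fin n) (Fin n) ℝ) (P Q : Matrix (Fin n) (Fin n) ℝ)
    (hP : P.PosDef) (hQ : Q.PosDef)
    (hLyap : (∑ i ∈ Finset.range (N + 1), (J i)ᵀ * P * J i) - P + Q = 0)
    (k₀ : ℕ) (X₀ : Matrix (Fin n) (Fin n) ℝ) (hX0 : X₀.PosSemidef)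
    (X : ℕ → Matrix (Fin n) (Fin n) ℝ) (hinit : X k₀ = X₀)
    (hrec : ∀ k, k₀ ≤ k → X (k + 1) = ∑ i ∈ Finset.range (N + 1), J i * X k * (J i)ᵀ) :
    ∀ k, k₀ ≤ k →
      (X k).trace ≤
        ((⨆ i, hP.1.eigenvalues i) / (⨅ i, hP.1.eigenvalues i)) *
          (1 - (⨅ i, hQ.1.eigenvalues i) / (⨆ i, hP.1.eigenvalues i)) ^ (k - k₀) * X₀.trace := by
  classical
  rcases Nat.eq_zero_or_pos n with hn | hn
  · subst hn
    intro k hk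
    have h1 : (X k).trace = 0 := by simp [Matrix.trace]
    have h2 : X₀.trace = 0 := by simp [Matrix.trace]
    rw [h1, h2, mul_zero]
  haveI : Nonempty (Fin n) := ⟨⟨0, hn⟩⟩
  set a : ℝ := ⨅ i, hP.1.eigenvalues i with ha
  set b : ℝ := ⨆ i, hP.1.eigenvalues i with hb
  set c : ℝ := ⨅ i, hQ.1.eigenvalues i with hc
  have hbddP : BddAbove (Set.range hP.1.eigenvalues) :=
    Set.Finite.bddAbove (Set.finite_range _)
  have ha0 : 0 < a := by
    obtain ⟨i, hi⟩ := Finite.exists_min hP.1.eigenvalues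
    exact lt_of_lt_of_le (hP.eigenvalues_pos i) (le_ciInf hi)
  have hb0 : 0 < b := by
    refine lt_of_lt_of_le (hP.eigenvalues_pos (Classical.arbitrary (Fin n))) ?_
    exact le_ciSup hbddP _
  have hc0 : 0 < c := by
    obtain ⟨i, hi⟩ := Finite.exists_min hQ.1.eigenvalues
    exact lt_of_lt_of_le (hQ.eigenvalues_pos i) (le_ciInf hi)
  -- the lyapunov sum equals P - Q and is PSD
  have hsum_eq : (∑ i ∈ Finset.range (N + 1), (J i)ᵀ * P * J i) = P - Q := by
    have := hLyap
    linear_combination (norm := module) hLyap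
  have hterm_psd : ∀ i : ℕ, ((J i)ᵀ * P * J i).PosSemidef := by
    intro i
    have := hP.posSemidef.conjTranspose_mul_mul_same (J i)
    simpa [Matrix.conjTranspose_eq_transpose_of_trivial] using this
  have hsum_psd : (P - Q).PosSemidef := by
    rw [← hsum_eq]
    induction (Finset.range (N + 1)) using Finset.induction with
    | empty => simpa using Matrix.PosSemidef.zero
    | insert _ _ hx ih =>
      rw [Finset.sum_insert hx]
      exact (hterm_psd _).add ih
  -- c ≤ b
  have hcb : c ≤ b := by
    have h1 := (trace_mul_bounds hQ.1 Matrix.PosSemidef.one).1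
    have h2 := (trace_mul_bounds hP.1 Matrix.PosSemidef.one).2
    rw [mul_one] at h1 h2
    have htrPQ : Q.trace ≤ P.trace := by
      have := psd_trace_nonneg hsum_psd
      rw [Matrix.trace_sub] at this
      linarith
    have htr1 : (0:ℝ) < (1 : Matrix (Fin n) (Fin n) ℝ).trace := by
      simp [Matrix.trace_one]
      exact_mod_cast hn
    nlinarith [h1, h2, htrPQ, htr1]
  set ρ : ℝ := 1 - c / b with hρ
  have hρ0 : 0 ≤ ρ := by
    rw [hρ, sub_nonneg]
    exact (div_le_one hb0).mpr hcb
  -- main induction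
  have key : ∀ k, k₀ ≤ k →
      (X k).PosSemidef ∧ (P * X k).trace ≤ ρ ^ (k - k₀) * (P * X₀).trace := by
    intro k hk
    induction k, hk using Nat.le_induction with
    | base => rw [hinit]; exact ⟨hX0, by simp⟩
    | succ k hk ih =>
      obtain ⟨hpsd, hV⟩ := ih
      have hterm : ∀ i : ℕ, (J i * X k * (J i)ᵀ).PosSemidef := by
        intro i
        have := hpsd.mul_mul_conjTranspose_same (J i)
        simpa [Matrix.conjTranspose_eq_transpose_of_trivial] using this
      have hpsd' : (X (k + 1)).PosSemidef := by
        rw [hrec k hk]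
        induction (Finset.range (N + 1)) using Finset.induction with
        | empty => simpa using Matrix.PosSemidef.zero
        | insert _ _ hx ih2 =>
          rw [Finset.sum_insert hx]
          exact (hterm _).add ih2
      refine ⟨hpsd', ?_⟩
      have hstep : (P * X (k + 1)).trace = ((P - Q) * X k).trace := by
        rw [hrec k hk, ← hsum_eq, Finset.sum_mul, Matrix.mul_sum, Matrix.trace_sum,
          Matrix.trace_sum]
        refine Finset.sum_congr rfl fun i _ => ?_
        rw [show P * (J i * X k * (J i)ᵀ) = (P * (J i * X k)) * (J i)ᵀ by noncomm_ring,
          Matrix.trace_mul_comm,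
          show (J i)ᵀ * (P * (J i * X k)) = (J i)ᵀ * P * J i * X k by noncomm_ring]
      have hQlow : c * (X k).trace ≤ (Q * X k).trace := (trace_mul_bounds hQ.1 hpsd).1
      have hPup : (P * X k).trace ≤ b * (X k).trace := (trace_mul_bounds hP.1 hpsd).2
      have hPlow : a * (X k).trace ≤ (P * X k).trace := (trace_mul_bounds hP.1 hpsd).1
      have htrXk : 0 ≤ (X k).trace := psd_trace_nonneg hpsd
      have hVk1 : (P * X (k + 1)).trace ≤ ρ * (P * X k).trace := by
        have hcbnn : (0:ℝ) ≤ c / b := by positivity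
        have hdiv : (c / b) * (P * X k).trace ≤ c * (X k).trace := by
          calc c / b * (P * X k).trace ≤ c / b * (b * (X k).trace) :=
                mul_le_mul_of_nonneg_left hPup hcbnn
            _ = c * (X k).trace := by field_simp
        have hexp : ρ * (P * X k).trace
            = (P * X k).trace - (c / b) * (P * X k).trace := by rw [hρ]; ring
        rw [hstep, Matrix.sub_mul, Matrix.trace_sub, hexp]
        linarith [hQlow, hdiv]
      have hpow : k + 1 - k₀ = (k - k₀) + 1 := by omega
      rw [hpow, pow_succ]
      calc (P * X (k + 1)).trace ≤ ρ * (P * X k).trace := hVk1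
        _ ≤ ρ * (ρ ^ (k - k₀) * (P * X₀).trace) := by
            exact mul_le_mul_of_nonneg_left hV hρ0
        _ = ρ ^ (k - k₀) * ρ * (P * X₀).trace := by ring
  intro k hk
  obtain ⟨hpsd, hV⟩ := key k hk
  have hPlow : a * (X k).trace ≤ (P * X k).trace := (trace_mul_bounds hP.1 hpsd).1
  have hPX0 : (P * X₀).trace ≤ b * X₀.trace := (trace_mul_bounds hP.1 hX0).2
  have hpow0 : (0:ℝ) ≤ ρ ^ (k - k₀) := pow_nonneg hρ0 _
  have h1 : a * (X k).trace ≤ ρ ^ (k - k₀) * (b * X₀.trace) :=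
    hPlow.trans (hV.trans (mul_le_mul_of_nonneg_left hPX0 hpow0))
  rw [div_mul_eq_mul_div, div_mul_eq_mul_div, le_div_iff₀ ha0]
  nlinarith [h1]
end

section
/- Consider the discrete-time system X(k+1) = 𝒟(X(k)), 𝒟(X) = Σ_{i=0}^{N} Jᵢ X Jᵢᵀ, and suppose there exists a symmetric positive definite matrix P and a constant α₃ > 0 such that 𝒟*(P) − P ⪯ −α₃ I. Then along any solution with X₀ ∈ 𝕊ⁿ_{⪰0}, the function V(X) = ⟨P, X⟩ satisfies V(X(k+1)) − V(X(k)) ≤ −(α₃/λ_max(P)) V(X(k)) for all k. -/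
open Matrix BigOperators

lemma trace_nonneg_of_psd {n : ℕ} {A : Matrix (Fin n) (Fin n) ℝ} (hA : A.PosSemidef) :
    0 ≤ A.trace := by
  rw [Matrix.trace]
  refine Finset.sum_nonneg fun i _ => ?_
  have := hA.dotProduct_mulVec_nonneg (Pi.single i 1)
  simpa [dotProduct, Matrix.mulVec, Pi.single_apply, Finset.mul_sum] using this

open scoped MatrixOrder in
lemma trace_mul_nonneg_of_psd {n : ℕ} {A B : Matrix (Fin n) (Fin n) ℝ}
    (hA : A.PosSemidef) (hB : B.PosSemidef) : 0 ≤ (A * B).trace := by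
  obtain ⟨C, rfl⟩ := CStarAlgebra.nonneg_iff_eq_star_mul_self.mp hA.nonneg
  rw [← Matrix.trace_mul_cycle]
  exact trace_nonneg_of_psd (hB.mul_mul_conjTranspose_same C)

lemma smul_one_sub_psd {n : ℕ} {P : Matrix (Fin n) (Fin n) ℝ} (hP : P.IsHermitian)
    {c : ℝ} (hc : ∀ i, hP.eigenvalues i ≤ c) :
    (c • (1 : Matrix (Fin n) (Fin n) ℝ) - P).PosSemidef := by
  have hU : (hP.eigenvectorUnitary : Matrix (Fin n) (Fin n) ℝ) *
      star (hP.eigenvectorUnitary : Matrix (Fin n) (Fin n) ℝ) = 1 :=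
    (Matrix.mem_unitaryGroup_iff).mp hP.eigenvectorUnitary.2
  have key : c • (1 : Matrix (Fin n) (Fin n) ℝ) - P =
      (hP.eigenvectorUnitary : Matrix (Fin n) (Fin n) ℝ) *
        Matrix.diagonal (fun i => c - hP.eigenvalues i) *
        (hP.eigenvectorUnitary : Matrix (Fin n) (Fin n) ℝ)ᴴ := by
    conv_lhs => rw [hP.spectral_theorem]
    have : (Matrix.diagonal (fun i => c - hP.eigenvalues i)) =
        c • 1 - Matrix.diagonal (RCLike.ofReal ∘ hP.eigenvalues) := by
      ext i j
      by_cases h : i = j <;>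
        simp [Matrix.diagonal_apply, Matrix.one_apply, h]
    rw [this]
    rw [Matrix.mul_sub, Matrix.sub_mul]
    congr 1
    rw [Matrix.mul_smul, Matrix.mul_one, Matrix.smul_mul]
    rw [show (hP.eigenvectorUnitary : Matrix (Fin n) (Fin n) ℝ)ᴴ =
      star (hP.eigenvectorUnitary : Matrix (Fin n) (Fin n) ℝ) from rfl, hU]
  rw [key]
  exact (Matrix.posSemidef_diagonal_iff.mpr fun i => by simpa using hc i).mul_mul_conjTranspose_same _

noncomputable def frob {n : ℕ} (A B : Matrix (Fin n) (Fin n) ℝ) : ℝ := (A * Bᵀ).trace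

theorem discrete_lyapunov_decrease {n N : ℕ}
    (J : ℕ → Matrix (Fin n) (Fin n) ℝ) (P : Matrix (Fin n) (Fin n) ℝ)
    (hP : P.PosDef) (α₃ : ℝ) (hα₃ : 0 < α₃)
    (hLyap : ((-α₃) • (1 : Matrix (Fin n) (Fin n) ℝ) -
        ((∑ i ∈ Finset.range (N + 1), (J i)ᵀ * P * J i) - P)).PosSemidef)
    (X : ℕ → Matrix (Fin n) (Fin n) ℝ) (hX0 : (X 0).PosSemidef)
    (hrec : ∀ k, X (k + 1) = ∑ i ∈ Finset.range (N + 1), J i * X k * (J i)ᵀ) :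
    ∀ k, frob P (X (k + 1)) - frob P (X k) ≤
      -(α₃ / (⨆ i, hP.1.eigenvalues i)) * frob P (X k) := by
  intro k
  rcases Nat.eq_zero_or_pos n with hn | hn
  · subst hn
    simp [frob, Matrix.trace]
  have hXpsd : ∀ m, (X m).PosSemidef := by
    intro m
    induction m with
    | zero => exact hX0
    | succ m ih =>
      rw [hrec m]
      refine Finset.sum_induction _ _ (fun a b ha hb => ha.add hb) Matrix.PosSemidef.zero ?_
      intro i _
      have := ih.mul_mul_conjTranspose_same (J i)
      simpa [Matrix.conjTranspose_eq_transpose_of_trivial] using this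
  have hXsymm : (X k)ᵀ = X k := by
    have := (hXpsd k).1
    rwa [Matrix.IsHermitian, Matrix.conjTranspose_eq_transpose_of_trivial] at this
  set Q : Matrix (Fin n) (Fin n) ℝ := ∑ i ∈ Finset.range (N + 1), (J i)ᵀ * P * J i with hQ
  have hstep : frob P (X (k + 1)) = (Q * X k).trace := by
    rw [frob, hrec k, Matrix.transpose_sum, Finset.mul_sum, Matrix.trace_sum, hQ,
      Finset.sum_mul, Matrix.trace_sum]
    refine Finset.sum_congr rfl fun i _ => ?_
    rw [Matrix.transpose_mul, Matrix.transpose_mul, Matrix.transpose_transpose, hXsymm]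
    simp only [← Matrix.mul_assoc]
    rw [Matrix.trace_mul_cycle]
    simp only [← Matrix.mul_assoc]
  have hfrobk : frob P (X k) = (P * X k).trace := by rw [frob, hXsymm]
  -- Lyapunov bound
  have h1 : 0 ≤ (((-α₃) • (1 : Matrix (Fin n) (Fin n) ℝ) - (Q - P)) * X k).trace :=
    trace_mul_nonneg_of_psd hLyap (hXpsd k)
  have h1' : (Q * X k).trace - (P * X k).trace ≤ -α₃ * (X k).trace := by
    rw [Matrix.sub_mul, Matrix.sub_mul, Matrix.trace_sub, Matrix.trace_sub,
      Matrix.smul_mul, Matrix.trace_smul, Matrix.one_mul] at h1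
    simp only [smul_eq_mul] at h1
    linarith
  -- eigenvalue bound
  set L : ℝ := ⨆ i, hP.1.eigenvalues i with hL
  have hne : Nonempty (Fin n) := ⟨⟨0, hn⟩⟩
  have hbdd : BddAbove (Set.range hP.1.eigenvalues) := Set.Finite.bddAbove (Set.finite_range _)
  have hle : ∀ i, hP.1.eigenvalues i ≤ L := fun i => le_ciSup hbdd i
  have hLpos : 0 < L := lt_of_lt_of_le (hP.eigenvalues_pos ⟨0, hn⟩) (hle _)
  have h2 : 0 ≤ ((L • (1 : Matrix (Fin n) (Fin n) ℝ) - P) * X k).trace :=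
    trace_mul_nonneg_of_psd (smul_one_sub_psd hP.1 hle) (hXpsd k)
  have h2' : (P * X k).trace ≤ L * (X k).trace := by
    rw [Matrix.sub_mul, Matrix.trace_sub, Matrix.smul_mul, Matrix.trace_smul,
      Matrix.one_mul] at h2
    simp only [smul_eq_mul] at h2
    linarith
  rw [hstep, hfrobk]
  have h3 : (α₃ / L) * (P * X k).trace ≤ α₃ * (X k).trace := by
    have := mul_le_mul_of_nonneg_left h2' (le_of_lt (div_pos hα₃ hLpos))
    calc (α₃ / L) * (P * X k).trace ≤ (α₃ / L) * (L * (X k).trace) := this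
      _ = α₃ * (X k).trace := by field_simp
  nlinarith [h1', h3]
end
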